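/- For the operator F : L²(0,1) → L²(0,1), (Fu)(t) = -c₀ exp(-∫₀ᵗ u(s) ds), and any u ∈ L²(0,1) with u ≥ 0 a.e. and any h ∈ L²(0,1), the Fréchet derivative satisfies 2⟨F'(u)h, h⟩ ≥ ∫₀¹ g(t) u(t) H(t)² dt, where g = -Fu and H(t) = ∫₀ᵗ h(s) ds. -/

import Mathlib

open RealInnerProductSpace MeasureTheory

section aux
open MeasureTheory Real Set intervalIntegral

noncomputable def prim (f : ℝ → ℝ) (t : ℝ) : ℝ := ∫ s in (0:ℝ)..t, f s

noncomputable def gee (c₀ : ℝ) (f : ℝ → ℝ) (t : ℝ) : ℝ := c₀ * Real.exp (-(prim f t))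

lemma exp_neg_lipschitz {x y : ℝ} (hx : 0 ≤ x) (hy : 0 ≤ y) :
    |Real.exp (-x) - Real.exp (-y)| ≤ |x - y| := by
  wlog h : x ≤ y generalizing x y
  · rw [abs_sub_comm, abs_sub_comm x y]; exact this hy hx (le_of_not_ge h)
  have h1 : Real.exp (-y) ≤ Real.exp (-x) := Real.exp_le_exp.2 (by linarith)
  have h2 : Real.exp (-x) - Real.exp (-y) ≤ y - x := by
    have hxe : Real.exp (-x) ≤ 1 := Real.exp_le_one_iff.2 (by linarith)
    have := Real.add_one_le_exp (x - y)
    have h3 : Real.exp (-x) * (1 - Real.exp (x - y)) ≤ 1 * (y - x) := by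
      apply mul_le_mul hxe (by linarith)
        (by have := Real.exp_le_one_iff.2 (by linarith : x - y ≤ 0); linarith) zero_le_one
    have h4 : Real.exp (-x) * Real.exp (x - y) = Real.exp (-y) := by
      rw [← Real.exp_add]; ring_nf
    nlinarith
  rw [abs_of_nonneg (by linarith), abs_of_nonpos (by linarith)]
  linarith

lemma abs_triple (x1 x2 y1 y2 z1 z2 : ℝ) :
    |x1 * y1 * z1 - x2 * y2 * z2| ≤
      |x1 - x2| * |y1| * |z1| + |x2| * |y1 - y2| * |z1| + |x2| * |y2| * |z1 - z2| := by
  have e : x1 * y1 * z1 - x2 * y2 * z2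
      = (x1 - x2) * y1 * z1 + x2 * (y1 - y2) * z1 + x2 * y2 * (z1 - z2) := by ring
  rw [e]
  calc |(x1 - x2) * y1 * z1 + x2 * (y1 - y2) * z1 + x2 * y2 * (z1 - z2)|
      ≤ |(x1 - x2) * y1 * z1 + x2 * (y1 - y2) * z1| + |x2 * y2 * (z1 - z2)| := abs_add_le _ _
    _ ≤ |(x1 - x2) * y1 * z1| + |x2 * (y1 - y2) * z1| + |x2 * y2 * (z1 - z2)| := by
        have := abs_add_le ((x1 - x2) * y1 * z1) (x2 * (y1 - y2) * z1); linarith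
    _ = |x1 - x2| * |y1| * |z1| + |x2| * |y1 - y2| * |z1| + |x2| * |y2| * |z1 - z2| := by
        simp [abs_mul]

lemma prim_abs_le {f : ℝ → ℝ} (hf : Integrable f volume) {t : ℝ} (ht : 0 ≤ t) :
    |prim f t| ≤ ∫ s, |f s| := by
  rw [prim, intervalIntegral.integral_of_le ht]
  calc |∫ s in Ioc (0:ℝ) t, f s| ≤ ∫ s in Ioc (0:ℝ) t, |f s| := by
        simpa [Real.norm_eq_abs] using
          norm_integral_le_integral_norm (μ := volume.restrict (Ioc (0:ℝ) t)) f
    _ ≤ ∫ s, |f s| := setIntegral_le_integral hf.abs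
        (Filter.Eventually.of_forall fun s => abs_nonneg _)

lemma prim_sub_abs_le {f g : ℝ → ℝ} (hf : Integrable f volume) (hg : Integrable g volume)
    {t : ℝ} (ht : 0 ≤ t) : |prim f t - prim g t| ≤ ∫ s, |f s - g s| := by
  have : prim f t - prim g t = prim (f - g) t := by
    rw [prim, prim, prim, ← intervalIntegral.integral_sub hf.intervalIntegrable
      hg.intervalIntegrable]
    rfl
  rw [this]
  exact prim_abs_le (hf.sub hg) ht

lemma prim_nonneg {f : ℝ → ℝ} (hf : ∀ s, 0 ≤ f s) {t : ℝ} (ht : 0 ≤ t) : 0 ≤ prim f t :=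
  intervalIntegral.integral_nonneg ht fun s _ => hf s

lemma prim_continuous {f : ℝ → ℝ} (hf : Integrable f volume) : Continuous (prim f) :=
  hf.continuous_primitive 0

lemma gee_nonneg {c₀ : ℝ} (hc₀ : 0 ≤ c₀) (f : ℝ → ℝ) (t : ℝ) : 0 ≤ gee c₀ f t := by
  rw [gee]; positivity

lemma gee_le {c₀ : ℝ} (hc₀ : 0 ≤ c₀) {f : ℝ → ℝ} (hf : ∀ s, 0 ≤ f s) {t : ℝ} (ht : 0 ≤ t) :
    gee c₀ f t ≤ c₀ := by
  rw [gee]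
  have h1 : Real.exp (-(prim f t)) ≤ 1 :=
    Real.exp_le_one_iff.2 (by linarith [prim_nonneg hf ht])
  nlinarith

lemma gee_lipschitz {c₀ : ℝ} (hc₀ : 0 ≤ c₀) {f g : ℝ → ℝ}
    (hf0 : ∀ s, 0 ≤ f s) (hg0 : ∀ s, 0 ≤ g s)
    (hf : Integrable f volume) (hg : Integrable g volume) {t : ℝ} (ht : 0 ≤ t) :
    |gee c₀ f t - gee c₀ g t| ≤ c₀ * ∫ s, |f s - g s| := by
  rw [gee, gee, ← mul_sub, abs_mul, abs_of_nonneg hc₀]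
  have h1 : |Real.exp (-(prim f t)) - Real.exp (-(prim g t))| ≤ |prim f t - prim g t| :=
    exp_neg_lipschitz (prim_nonneg hf0 ht) (prim_nonneg hg0 ht)
  have h2 : |prim f t - prim g t| ≤ ∫ s, |f s - g s| := prim_sub_abs_le hf hg ht
  have := mul_le_mul_of_nonneg_left (h1.trans h2) hc₀
  linarith

lemma cont_case (c₀ : ℝ) (hc₀ : 0 ≤ c₀) (v k : ℝ → ℝ) (hv : Continuous v)
    (hk : Continuous k) :
    ∫ t in Ioc (0:ℝ) 1, gee c₀ v t * v t * (prim k t) ^ 2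
      ≤ 2 * ∫ t in Ioc (0:ℝ) 1, gee c₀ v t * prim k t * k t := by
  rw [← intervalIntegral.integral_of_le (zero_le_one (α := ℝ)),
    ← intervalIntegral.integral_of_le (zero_le_one (α := ℝ))]
  have hGd : ∀ t : ℝ, HasDerivAt (prim v) (v t) t := fun t =>
    intervalIntegral.integral_hasDerivAt_right (hv.intervalIntegrable 0 t)
      (hv.stronglyMeasurable.stronglyMeasurableAtFilter) hv.continuousAt
  have hKd : ∀ t : ℝ, HasDerivAt (prim k) (k t) t := fun t =>
    intervalIntegral.integral_hasDerivAt_right (hk.intervalIntegrable 0 t)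
      (hk.stronglyMeasurable.stronglyMeasurableAtFilter) hk.continuousAt
  have hGc : Continuous (prim v) := continuous_iff_continuousAt.2 fun t => (hGd t).continuousAt
  have hKc : Continuous (prim k) := continuous_iff_continuousAt.2 fun t => (hKd t).continuousAt
  set Φ : ℝ → ℝ := fun t => c₀ * Real.exp (-(prim v t)) * (prim k t) ^ 2 with hΦ
  set φ : ℝ → ℝ := fun t =>
    c₀ * (Real.exp (-(prim v t)) * (-(v t))) * (prim k t) ^ 2
      + c₀ * Real.exp (-(prim v t)) * (2 * prim k t * k t) with hφ
  have hΦd : ∀ t : ℝ, HasDerivAt Φ (φ t) t := by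
    intro t
    have h1 : HasDerivAt (fun t => Real.exp (-(prim v t)))
        (Real.exp (-(prim v t)) * (-(v t))) t := by
      have := ((hGd t).neg).exp
      simpa [mul_comm] using this
    have h2 : HasDerivAt (fun t => (prim k t) ^ 2) (2 * prim k t * k t) t := by
      have := (hKd t).fun_pow 2
      simpa [mul_comm, mul_assoc] using this
    have := (h1.const_mul c₀).mul h2
    exact this
  have hφc : Continuous φ := by fun_prop
  have hint : ∫ t in (0:ℝ)..1, φ t = Φ 1 - Φ 0 :=
    intervalIntegral.integral_eq_sub_of_hasDerivAt (fun t _ => hΦd t)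
      (hφc.intervalIntegrable 0 1)
  have hsplit : ∫ t in (0:ℝ)..1, φ t
      = -(∫ t in (0:ℝ)..1, gee c₀ v t * v t * (prim k t) ^ 2)
        + 2 * ∫ t in (0:ℝ)..1, gee c₀ v t * prim k t * k t := by
    rw [← intervalIntegral.integral_neg, ← intervalIntegral.integral_const_mul,
      ← intervalIntegral.integral_add]
    · apply intervalIntegral.integral_congr
      intro t _
      simp only [hφ, gee]
      ring
    · apply Continuous.intervalIntegrable
      have : Continuous (gee c₀ v) := by
        unfold gee; fun_prop
      fun_prop
    · apply Continuous.intervalIntegrable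
      have : Continuous (gee c₀ v) := by
        unfold gee; fun_prop
      fun_prop
  have hΦ0 : Φ 0 = 0 := by simp [hΦ, prim]
  have hΦ1 : 0 ≤ Φ 1 := by simp only [hΦ]; positivity
  rw [hΦ0, sub_zero, hsplit] at hint
  linarith

lemma mul3_le {a b c a' b' c' : ℝ} (ha : |a| ≤ a') (hb : |b| ≤ b') (hc : |c| ≤ c') :
    |a| * |b| * |c| ≤ a' * b' * c' :=
  mul_le_mul (mul_le_mul ha hb (abs_nonneg b) ((abs_nonneg a).trans ha)) hc (abs_nonneg c)
    (mul_nonneg ((abs_nonneg a).trans ha) ((abs_nonneg b).trans hb))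

set_option maxHeartbeats 2000000 in
lemma core (c₀ : ℝ) (hc₀ : 0 ≤ c₀) (W h : ℝ → ℝ)
    (hW : Integrable W volume) (hh : Integrable h volume) (hW0 : ∀ t, 0 ≤ W t) :
    ∫ t in Ioc (0:ℝ) 1, gee c₀ W t * W t * (prim h t) ^ 2
      ≤ 2 * ∫ t in Ioc (0:ℝ) 1, gee c₀ W t * prim h t * h t := by
  classical
  set Mh := ∫ s, |h s| with hMhdef
  set Mw := ∫ s, W s with hMwdef
  have hMh0 : 0 ≤ Mh := integral_nonneg fun s => abs_nonneg _
  have hMw0 : 0 ≤ Mw := integral_nonneg hW0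
  have meas01 : MeasurableSet (Ioc (0:ℝ) 1) := measurableSet_Ioc
  have hHb : ∀ t : ℝ, 0 ≤ t → |prim h t| ≤ Mh := fun t ht => prim_abs_le hh ht
  have hgWc : Continuous (gee c₀ W) := by
    unfold gee
    exact (continuous_const.mul ((prim_continuous hW).neg.rexp))
  have hprimhc : Continuous (prim h) := prim_continuous hh
  have hgWb : ∀ t : ℝ, 0 ≤ t → |gee c₀ W t| ≤ c₀ := fun t ht => by
    rw [abs_of_nonneg (gee_nonneg hc₀ W t)]; exact gee_le hc₀ hW0 ht
  -- integrability of the two integrands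
  have hb1int : IntegrableOn (fun t => gee c₀ W t * W t * (prim h t) ^ 2) (Ioc 0 1) volume := by
    have base : IntegrableOn (fun t => (gee c₀ W t * (prim h t) ^ 2) * W t) (Ioc 0 1) volume := by
      apply Integrable.bdd_mul (c := c₀ * Mh ^ 2) hW.integrableOn
        ((hgWc.mul (hprimhc.pow 2)).aestronglyMeasurable)
      filter_upwards [ae_restrict_mem meas01] with t ht
      have ht0 : (0:ℝ) ≤ t := ht.1.le
      rw [Real.norm_eq_abs, Pi.mul_apply, Pi.pow_apply, abs_mul, abs_pow]
      exact mul_le_mul (hgWb t ht0) (pow_le_pow_left₀ (abs_nonneg _) (hHb t ht0) 2)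
        (by positivity) hc₀
    exact base.congr (Filter.Eventually.of_forall fun t => by ring)
  have ha1int : IntegrableOn (fun t => gee c₀ W t * prim h t * h t) (Ioc 0 1) volume := by
    apply Integrable.bdd_mul (c := c₀ * Mh) hh.integrableOn
      ((hgWc.mul hprimhc).aestronglyMeasurable)
    filter_upwards [ae_restrict_mem meas01] with t ht
    have ht0 : (0:ℝ) ≤ t := ht.1.le
    rw [Real.norm_eq_abs, Pi.mul_apply, abs_mul]
    exact mul_le_mul (hgWb t ht0) (hHb t ht0) (abs_nonneg _) hc₀
  set C : ℝ := c₀ * Mh ^ 2 * Mw + c₀ * Mh ^ 2 + c₀ * (2 * Mh + 1) * (Mw + 1)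
      + 2 * (c₀ * Mh * Mh + c₀ * Mh + c₀ * (Mh + 1)) with hCdef
  have hC0 : 0 ≤ C := by positivity
  -- reduce to epsilon version
  suffices Hmain : ∀ ε : ℝ, 0 < ε → ε ≤ 1 →
      ∫ t in Ioc (0:ℝ) 1, gee c₀ W t * W t * (prim h t) ^ 2
        ≤ 2 * (∫ t in Ioc (0:ℝ) 1, gee c₀ W t * prim h t * h t) + C * ε by
    by_contra hcon
    push_neg at hcon
    set δ := (∫ t in Ioc (0:ℝ) 1, gee c₀ W t * W t * (prim h t) ^ 2)
      - 2 * ∫ t in Ioc (0:ℝ) 1, gee c₀ W t * prim h t * h t with hδdef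
    have hδ : 0 < δ := by rw [hδdef]; linarith
    have hε : 0 < min 1 (δ / (2 * (C + 1))) := by positivity
    have := Hmain _ hε (min_le_left _ _)
    have hle : C * min 1 (δ / (2 * (C + 1))) < δ := by
      have h1 : C * min 1 (δ / (2 * (C + 1))) ≤ C * (δ / (2 * (C + 1))) :=
        mul_le_mul_of_nonneg_left (min_le_right _ _) hC0
      have h2 : C * (δ / (2 * (C + 1))) < δ := by
        rw [div_eq_inv_mul, ← mul_assoc]
        have hC1 : (0:ℝ) < 2 * (C + 1) := by linarith
        rw [mul_comm C (2 * (C + 1))⁻¹, mul_assoc]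
        have : (2 * (C + 1))⁻¹ * (C * δ) < (2 * (C + 1))⁻¹ * ((2 * (C + 1)) * δ) := by
          apply mul_lt_mul_of_pos_left _ (by positivity)
          nlinarith
        calc (2 * (C + 1))⁻¹ * (C * δ) < (2 * (C + 1))⁻¹ * ((2 * (C + 1)) * δ) := this
          _ = δ := by field_simp
      linarith
    rw [hδdef] at hle
    linarith
  intro ε hε hε1
  -- continuous approximations
  obtain ⟨v₀, -, hv₀dist, hv₀cont, hv₀int⟩ := hW.exists_hasCompactSupport_integral_sub_le hε
  obtain ⟨k, -, hkdist, hkcont, hkint⟩ := hh.exists_hasCompactSupport_integral_sub_le hε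
  set v : ℝ → ℝ := fun t => max (v₀ t) 0 with hvdef
  have hvcont : Continuous v := hv₀cont.max continuous_const
  have hv0 : ∀ t, 0 ≤ v t := fun t => le_max_right _ _
  have hvint : Integrable v volume := hv₀int.pos_part
  have hWv : ∫ s, |W s - v s| ≤ ε := by
    have hpt : ∀ s, |W s - v s| ≤ ‖W s - v₀ s‖ := by
      intro s
      rw [Real.norm_eq_abs, show v s = max (v₀ s) 0 from rfl]
      rcases le_or_gt 0 (v₀ s) with hs | hs
      · rw [max_eq_left hs]
      · rw [max_eq_right hs.le, sub_zero, abs_of_nonneg (hW0 s)]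
        have : |W s - v₀ s| = W s - v₀ s := abs_of_nonneg (by linarith [hW0 s])
        linarith
    calc ∫ s, |W s - v s| ≤ ∫ s, ‖W s - v₀ s‖ :=
          integral_mono (hW.sub hvint).abs (hW.sub hv₀int).norm hpt
      _ ≤ ε := hv₀dist
  have hhk : ∫ s, |h s - k s| ≤ ε := by
    simpa [Real.norm_eq_abs] using hkdist
  -- more pointwise bounds
  have hKb : ∀ t : ℝ, 0 ≤ t → |prim k t| ≤ Mh + ε := by
    intro t ht
    have h1 := prim_sub_abs_le hh hkint ht
    have h2 := hHb t ht
    have h3 := abs_add_le (prim k t - prim h t) (prim h t)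
    rw [sub_add_cancel, abs_sub_comm] at h3
    linarith
  have hgvc : Continuous (gee c₀ v) := by
    unfold gee
    exact continuous_const.mul ((prim_continuous hvint).neg.rexp)
  have hprimkc : Continuous (prim k) := prim_continuous hkint
  have hgvb : ∀ t : ℝ, 0 ≤ t → |gee c₀ v t| ≤ c₀ := fun t ht => by
    rw [abs_of_nonneg (gee_nonneg hc₀ v t)]; exact gee_le hc₀ hv0 ht
  have hΔg : ∀ t : ℝ, 0 ≤ t → |gee c₀ W t - gee c₀ v t| ≤ c₀ * ε := fun t ht =>
    (gee_lipschitz hc₀ hW0 hv0 hW hvint ht).trans (mul_le_mul_of_nonneg_left hWv hc₀)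
  have hΔH : ∀ t : ℝ, 0 ≤ t → |prim h t - prim k t| ≤ ε := fun t ht =>
    (prim_sub_abs_le hh hkint ht).trans hhk
  have hb2int : IntegrableOn (fun t => gee c₀ v t * v t * (prim k t) ^ 2) (Ioc 0 1) volume :=
    ((hgvc.mul hvcont).mul (hprimkc.pow 2)).integrableOn_Ioc
  have ha2int : IntegrableOn (fun t => gee c₀ v t * prim k t * k t) (Ioc 0 1) volume :=
    ((hgvc.mul hprimkc).mul hkcont).integrableOn_Ioc
  -- integral bounds
  have hIW : ∫ t in Ioc (0:ℝ) 1, W t ≤ Mw :=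
    setIntegral_le_integral hW (Filter.Eventually.of_forall hW0)
  have hIWv : ∫ t in Ioc (0:ℝ) 1, |W t - v t| ≤ ε :=
    (setIntegral_le_integral (hW.sub hvint).abs
      (Filter.Eventually.of_forall fun s => abs_nonneg _)).trans hWv
  have hIh : ∫ t in Ioc (0:ℝ) 1, |h t| ≤ Mh :=
    setIntegral_le_integral hh.abs (Filter.Eventually.of_forall fun s => abs_nonneg _)
  have hIhk : ∫ t in Ioc (0:ℝ) 1, |h t - k t| ≤ ε :=
    (setIntegral_le_integral (hh.sub hkint).abs
      (Filter.Eventually.of_forall fun s => abs_nonneg _)).trans hhk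
  have hIv : ∫ t in Ioc (0:ℝ) 1, v t ≤ Mw + ε := by
    have h1 : ∫ t in Ioc (0:ℝ) 1, v t ≤ ∫ s, v s :=
      setIntegral_le_integral hvint (Filter.Eventually.of_forall hv0)
    have h2 : (∫ s, v s) - ∫ s, W s ≤ ε := by
      have e : (∫ s, v s) - ∫ s, W s = ∫ s, (v s - W s) := (integral_sub hvint hW).symm
      have h3 : ∫ s, (v s - W s) ≤ ∫ s, |W s - v s| := by
        apply integral_mono (hvint.sub hW) (hW.sub hvint).abs
        intro s
        show v s - W s ≤ |W s - v s|
        rw [abs_sub_comm]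
        exact le_abs_self _
      linarith
    linarith
  -- difference of the b-integrals
  have hbdiff : |(∫ t in Ioc (0:ℝ) 1, gee c₀ W t * W t * (prim h t) ^ 2)
      - ∫ t in Ioc (0:ℝ) 1, gee c₀ v t * v t * (prim k t) ^ 2|
      ≤ c₀ * Mh ^ 2 * Mw * ε + c₀ * Mh ^ 2 * ε + c₀ * (2 * Mh + 1) * (Mw + 1) * ε := by
    set c1 : ℝ := c₀ * ε * Mh ^ 2 with hc1def
    set c2 : ℝ := c₀ * Mh ^ 2 with hc2def
    set c3 : ℝ := c₀ * ((2 * Mh + 1) * ε) with hc3def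
    have hc1 : 0 ≤ c1 := by rw [hc1def]; positivity
    have hc2 : 0 ≤ c2 := by rw [hc2def]; positivity
    have hc3 : 0 ≤ c3 := by rw [hc3def]; positivity
    have hB1 : IntegrableOn (fun t => c1 * W t) (Ioc (0:ℝ) 1) volume :=
      hW.integrableOn.const_mul c1
    have hB2 : IntegrableOn (fun t => c2 * |W t - v t|) (Ioc (0:ℝ) 1) volume :=
      (hW.sub hvint).abs.integrableOn.const_mul c2
    have hB3 : IntegrableOn (fun t => c3 * v t) (Ioc (0:ℝ) 1) volume :=
      hvint.integrableOn.const_mul c3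
    have hpt : ∀ t ∈ Ioc (0:ℝ) 1,
        |gee c₀ W t * W t * (prim h t) ^ 2 - gee c₀ v t * v t * (prim k t) ^ 2|
          ≤ c1 * W t + c2 * |W t - v t| + c3 * v t := by
      intro t ht
      have ht0 : (0:ℝ) ≤ t := ht.1.le
      have e1 := abs_triple (gee c₀ W t) (gee c₀ v t) (W t) (v t)
        ((prim h t) ^ 2) ((prim k t) ^ 2)
      have hH2 : |(prim h t) ^ 2| ≤ Mh ^ 2 := by
        rw [abs_pow]; exact pow_le_pow_left₀ (abs_nonneg _) (hHb t ht0) 2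
      have hHK2 : |(prim h t) ^ 2 - (prim k t) ^ 2| ≤ (2 * Mh + 1) * ε := by
        have e2 : (prim h t) ^ 2 - (prim k t) ^ 2
            = (prim h t + prim k t) * (prim h t - prim k t) := by ring
        rw [e2, abs_mul]
        have hsum : |prim h t + prim k t| ≤ 2 * Mh + 1 := by
          have := abs_add_le (prim h t) (prim k t)
          have := hHb t ht0
          have := hKb t ht0
          linarith
        exact mul_le_mul hsum (hΔH t ht0) (abs_nonneg _) (by linarith)
      have T1 : |gee c₀ W t - gee c₀ v t| * |W t| * |(prim h t) ^ 2|
          ≤ (c₀ * ε) * W t * Mh ^ 2 :=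
        mul3_le (hΔg t ht0) (le_of_eq (abs_of_nonneg (hW0 t))) hH2
      have T2 : |gee c₀ v t| * |W t - v t| * |(prim h t) ^ 2|
          ≤ c₀ * |W t - v t| * Mh ^ 2 :=
        mul3_le (hgvb t ht0) le_rfl hH2
      have T3 : |gee c₀ v t| * |v t| * |(prim h t) ^ 2 - (prim k t) ^ 2|
          ≤ c₀ * v t * ((2 * Mh + 1) * ε) :=
        mul3_le (hgvb t ht0) (le_of_eq (abs_of_nonneg (hv0 t))) hHK2
      rw [hc1def, hc2def, hc3def]
      linarith [e1, T1, T2, T3]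
    calc |(∫ t in Ioc (0:ℝ) 1, gee c₀ W t * W t * (prim h t) ^ 2)
        - ∫ t in Ioc (0:ℝ) 1, gee c₀ v t * v t * (prim k t) ^ 2|
        = |∫ t in Ioc (0:ℝ) 1,
            (gee c₀ W t * W t * (prim h t) ^ 2 - gee c₀ v t * v t * (prim k t) ^ 2)| := by
          rw [integral_sub hb1int hb2int]
      _ ≤ ∫ t in Ioc (0:ℝ) 1,
            |gee c₀ W t * W t * (prim h t) ^ 2 - gee c₀ v t * v t * (prim k t) ^ 2| := by
          simpa [Real.norm_eq_abs] using
            norm_integral_le_integral_norm (μ := volume.restrict (Ioc (0:ℝ) 1))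
              (fun t => gee c₀ W t * W t * (prim h t) ^ 2 - gee c₀ v t * v t * (prim k t) ^ 2)
      _ ≤ ∫ t in Ioc (0:ℝ) 1, (c1 * W t + c2 * |W t - v t| + c3 * v t) := by
          apply setIntegral_mono_on ((hb1int.sub hb2int).abs) ((hB1.add hB2).add hB3) meas01 hpt
      _ = c1 * (∫ t in Ioc (0:ℝ) 1, W t) + c2 * (∫ t in Ioc (0:ℝ) 1, |W t - v t|)
            + c3 * ∫ t in Ioc (0:ℝ) 1, v t := by
          rw [integral_add (show IntegrableOn (fun t => c1 * W t + c2 * |W t - v t|)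
              (Ioc (0:ℝ) 1) volume from hB1.add hB2) hB3, integral_add hB1 hB2,
            MeasureTheory.integral_const_mul, MeasureTheory.integral_const_mul, MeasureTheory.integral_const_mul]
      _ ≤ c1 * Mw + c2 * ε + c3 * (Mw + ε) := by
          exact add_le_add (add_le_add (mul_le_mul_of_nonneg_left hIW hc1)
            (mul_le_mul_of_nonneg_left hIWv hc2)) (mul_le_mul_of_nonneg_left hIv hc3)
      _ ≤ c₀ * Mh ^ 2 * Mw * ε + c₀ * Mh ^ 2 * ε + c₀ * (2 * Mh + 1) * (Mw + 1) * ε := by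
          rw [hc1def, hc2def, hc3def]
          nlinarith [mul_nonneg (mul_nonneg hc₀ (show (0:ℝ) ≤ 2 * Mh + 1 by linarith))
            (mul_nonneg hε.le (show (0:ℝ) ≤ 1 - ε by linarith))]
  -- difference of the a-integrals
  have hadiff : |(∫ t in Ioc (0:ℝ) 1, gee c₀ W t * prim h t * h t)
      - ∫ t in Ioc (0:ℝ) 1, gee c₀ v t * prim k t * k t|
      ≤ (c₀ * Mh * Mh + c₀ * Mh + c₀ * (Mh + 1)) * ε := by
    set c4 : ℝ := c₀ * ε * Mh with hc4def
    set c5 : ℝ := c₀ * ε with hc5def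
    set c6 : ℝ := c₀ * (Mh + 1) with hc6def
    have hc4 : 0 ≤ c4 := by rw [hc4def]; positivity
    have hc5 : 0 ≤ c5 := by rw [hc5def]; positivity
    have hc6 : 0 ≤ c6 := by rw [hc6def]; positivity
    have hB1 : IntegrableOn (fun t => c4 * |h t|) (Ioc (0:ℝ) 1) volume :=
      hh.abs.integrableOn.const_mul c4
    have hB2 : IntegrableOn (fun t => c5 * |h t|) (Ioc (0:ℝ) 1) volume :=
      hh.abs.integrableOn.const_mul c5
    have hB3 : IntegrableOn (fun t => c6 * |h t - k t|) (Ioc (0:ℝ) 1) volume :=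
      (hh.sub hkint).abs.integrableOn.const_mul c6
    have hpt : ∀ t ∈ Ioc (0:ℝ) 1,
        |gee c₀ W t * prim h t * h t - gee c₀ v t * prim k t * k t|
          ≤ c4 * |h t| + c5 * |h t| + c6 * |h t - k t| := by
      intro t ht
      have ht0 : (0:ℝ) ≤ t := ht.1.le
      have e1 := abs_triple (gee c₀ W t) (gee c₀ v t) (prim h t) (prim k t) (h t) (k t)
      have T1 : |gee c₀ W t - gee c₀ v t| * |prim h t| * |h t|
          ≤ (c₀ * ε) * Mh * |h t| :=
        mul3_le (hΔg t ht0) (hHb t ht0) le_rfl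
      have T2 : |gee c₀ v t| * |prim h t - prim k t| * |h t| ≤ c₀ * ε * |h t| := by
        have := mul3_le (hgvb t ht0) (hΔH t ht0) (le_refl |h t|)
        linarith
      have T3 : |gee c₀ v t| * |prim k t| * |h t - k t|
          ≤ c₀ * (Mh + 1) * |h t - k t| :=
        mul3_le (hgvb t ht0) ((hKb t ht0).trans (by linarith)) le_rfl
      rw [hc4def, hc5def, hc6def]
      linarith [e1, T1, T2, T3]
    calc |(∫ t in Ioc (0:ℝ) 1, gee c₀ W t * prim h t * h t)
        - ∫ t in Ioc (0:ℝ) 1, gee c₀ v t * prim k t * k t|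
        = |∫ t in Ioc (0:ℝ) 1,
            (gee c₀ W t * prim h t * h t - gee c₀ v t * prim k t * k t)| := by
          rw [integral_sub ha1int ha2int]
      _ ≤ ∫ t in Ioc (0:ℝ) 1,
            |gee c₀ W t * prim h t * h t - gee c₀ v t * prim k t * k t| := by
          simpa [Real.norm_eq_abs] using
            norm_integral_le_integral_norm (μ := volume.restrict (Ioc (0:ℝ) 1))
              (fun t => gee c₀ W t * prim h t * h t - gee c₀ v t * prim k t * k t)
      _ ≤ ∫ t in Ioc (0:ℝ) 1, (c4 * |h t| + c5 * |h t| + c6 * |h t - k t|) := by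
          apply setIntegral_mono_on ((ha1int.sub ha2int).abs) ((hB1.add hB2).add hB3) meas01 hpt
      _ = c4 * (∫ t in Ioc (0:ℝ) 1, |h t|) + c5 * (∫ t in Ioc (0:ℝ) 1, |h t|)
            + c6 * ∫ t in Ioc (0:ℝ) 1, |h t - k t| := by
          rw [integral_add (show IntegrableOn (fun t => c4 * |h t| + c5 * |h t|)
              (Ioc (0:ℝ) 1) volume from hB1.add hB2) hB3, integral_add hB1 hB2,
            MeasureTheory.integral_const_mul, MeasureTheory.integral_const_mul, MeasureTheory.integral_const_mul]
      _ ≤ c4 * Mh + c5 * Mh + c6 * ε := by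
          exact add_le_add (add_le_add (mul_le_mul_of_nonneg_left hIh hc4)
            (mul_le_mul_of_nonneg_left hIh hc5)) (mul_le_mul_of_nonneg_left hIhk hc6)
      _ ≤ (c₀ * Mh * Mh + c₀ * Mh + c₀ * (Mh + 1)) * ε := by
          rw [hc4def, hc5def, hc6def]
          nlinarith []
  have hcont := cont_case c₀ hc₀ v k hvcont hkcont
  have hb := (abs_le.1 hbdiff).2
  have ha := (abs_le.1 hadiff).1
  rw [hCdef]
  nlinarith [hcont, hb, ha]

end aux

set_option maxHeartbeats 2000000 in
theorem stmt_16
    (μ : Measure ℝ) (hμ : μ = volume.restrict (Set.Ioc (0:ℝ) 1))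
    (c₀ : ℝ) (hc₀ : 0 < c₀)
    (F : Lp ℝ 2 μ → Lp ℝ 2 μ)
    (hF : ∀ u : Lp ℝ 2 μ,
      (F u : ℝ → ℝ) =ᵐ[μ]
        fun t => -c₀ * Real.exp (-(∫ s in Set.Ioc (0:ℝ) t, u s)))
    (F' : Lp ℝ 2 μ → (Lp ℝ 2 μ →L[ℝ] Lp ℝ 2 μ))
    (hF' : ∀ u h : Lp ℝ 2 μ,
      (F' u h : ℝ → ℝ) =ᵐ[μ]
        fun t => -(F u t) * (∫ s in Set.Ioc (0:ℝ) t, h s)) :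
    ∀ u : Lp ℝ 2 μ, (∀ᵐ t ∂μ, 0 ≤ u t) →
      ∀ h : Lp ℝ 2 μ,
        2 * ⟪F' u h, h⟫ ≥
          ∫ t in Set.Ioc (0:ℝ) 1,
            (-(F u t)) * u t * (∫ s in Set.Ioc (0:ℝ) t, h s) ^ 2 := by
  subst hμ
  haveI : Fact (volume (Set.Ioc (0:ℝ) 1) < ⊤) := ⟨by simp⟩
  intro u hu0 h
  have hu_int : Integrable (u : ℝ → ℝ) (volume.restrict (Set.Ioc (0:ℝ) 1)) :=
    (Lp.memLp u).integrable one_le_two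
  have hh_int : Integrable (h : ℝ → ℝ) (volume.restrict (Set.Ioc (0:ℝ) 1)) :=
    (Lp.memLp h).integrable one_le_two
  set W : ℝ → ℝ := (Set.Ioc (0:ℝ) 1).indicator (fun s => max (u s) 0) with hWdef
  set Hf : ℝ → ℝ := (Set.Ioc (0:ℝ) 1).indicator (fun s => h s) with hfdef
  have hWint : Integrable W volume := by
    rw [hWdef, integrable_indicator_iff measurableSet_Ioc]
    exact hu_int.pos_part
  have hHint : Integrable Hf volume := by
    rw [hfdef, integrable_indicator_iff measurableSet_Ioc]
    exact hh_int
  have hW0 : ∀ t, 0 ≤ W t := fun t => by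
    rw [hWdef]
    exact Set.indicator_nonneg (fun s _ => le_max_right _ _) t
  have eqH : ∀ t ∈ Set.Ioc (0:ℝ) 1,
      (∫ s in Set.Ioc (0:ℝ) t, (h : ℝ → ℝ) s) = prim Hf t := by
    intro t ht
    rw [prim, intervalIntegral.integral_of_le ht.1.le, hfdef,
      setIntegral_indicator measurableSet_Ioc,
      Set.inter_eq_self_of_subset_left (Set.Ioc_subset_Ioc le_rfl ht.2)]
  have eqGt : ∀ t ∈ Set.Ioc (0:ℝ) 1,
      (∫ s in Set.Ioc (0:ℝ) t, (u : ℝ → ℝ) s) = prim W t := by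
    intro t ht
    rw [prim, intervalIntegral.integral_of_le ht.1.le, hWdef,
      setIntegral_indicator measurableSet_Ioc,
      Set.inter_eq_self_of_subset_left (Set.Ioc_subset_Ioc le_rfl ht.2)]
    apply setIntegral_congr_ae measurableSet_Ioc
    have h1 := ae_restrict_of_ae_restrict_of_subset (Set.Ioc_subset_Ioc le_rfl ht.2) hu0
    filter_upwards [(ae_restrict_iff' measurableSet_Ioc).1 h1] with s hs hsm
    exact (max_eq_left (hs hsm)).symm
  have eqR : ∫ t in Set.Ioc (0:ℝ) 1,
        (-(F u t)) * u t * (∫ s in Set.Ioc (0:ℝ) t, (h : ℝ → ℝ) s) ^ 2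
      = ∫ t in Set.Ioc (0:ℝ) 1, gee c₀ W t * W t * (prim Hf t) ^ 2 := by
    apply setIntegral_congr_ae measurableSet_Ioc
    filter_upwards [(ae_restrict_iff' measurableSet_Ioc).1 (hF u),
      (ae_restrict_iff' measurableSet_Ioc).1 hu0] with t ht1 ht2 htm
    have e3 : (u : ℝ → ℝ) t = W t := by
      rw [hWdef, Set.indicator_of_mem htm]
      exact (max_eq_left (ht2 htm)).symm
    rw [ht1 htm, eqGt t htm, eqH t htm, e3, gee]
    ring
  have eqL : ⟪F' u h, h⟫ = ∫ t in Set.Ioc (0:ℝ) 1, gee c₀ W t * prim Hf t * Hf t := by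
    rw [MeasureTheory.L2.inner_def]
    simp only [RCLike.inner_apply, conj_trivial]
    apply MeasureTheory.integral_congr_ae
    filter_upwards [hF' u h, hF u, hu0, ae_restrict_mem measurableSet_Ioc]
      with t ht1 ht2 ht3 htm
    have e4 : (h : ℝ → ℝ) t = Hf t := by rw [hfdef, Set.indicator_of_mem htm]
    rw [ht1, ht2, eqGt t htm, eqH t htm, e4, gee]
    ring
  rw [ge_iff_le, eqR, eqL]
  exact core c₀ hc₀.le W Hf hWint hHint hW0
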